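/- For every natural number h and every real t ≥ 0, ∫₀ᵗ s^h e^{−3s} [ 2 Σ_{k=0}^{h} (1/(k!(h−k)!)) Σ_{j=0}^{k−1} sʲ/j! + Σ_{k=0}^{h} sᵏ/(k!²(h−k)!) ] ds = Σ_{k=0}^{h} [ C(h,k) C(h+k,k) (1/3)^{h+k+1} + 2 C(h,k) Σ_{j=0}^{k−1} C(h+j,j) (1/3)^{h+j+1} ] − e^{−3t} Σ_{k=0}^{h} [ C(h,k) C(h+k,k) (1/3)^{h+k+1} Σ_{i=0}^{h+k} (3t)^i/i! + 2 C(h,k) Σ_{j=0}^{k−1} C(h+j,j) (1/3)^{h+j+1} Σ_{i=0}^{h+j} (3t)^i/i! ]. (This is the time-dependent density ρ_t^{(h+1)}(0) of the center site at layer h+1 in the 3-site multilayer parking system with unit-rate Poisson arrivals, obtained by integrating the probability that the height at the center equals h.) -/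

import Mathlib

open Real Finset

lemma deriv_aux (n : ℕ) (x : ℝ) :
    HasDerivAt (fun x : ℝ => -((n.factorial : ℝ)/3^(n+1)) *
      (Real.exp (-(3*x)) * ∑ i ∈ range (n+1), (3*x)^i / (Nat.factorial i)))
      (x ^ n * Real.exp (-(3*x))) x := by
  have hS : HasDerivAt (fun x : ℝ => ∑ i ∈ range (n+1), (3*x)^i / (Nat.factorial i))
      (3 * ∑ i ∈ range n, (3*x)^i / (Nat.factorial i)) x := by
    have := HasDerivAt.fun_sum (fun i _ => ((((hasDerivAt_id x).const_mul 3).pow i).div_const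
      (Nat.factorial i : ℝ)) : ∀ i ∈ range (n+1), HasDerivAt (fun x : ℝ => (3*x)^i / (Nat.factorial i))
        ((i : ℝ) * (3*x)^(i-1) * (3*1) / (Nat.factorial i)) x)
    refine this.congr_deriv (Eq.symm ?_)
    rw [Finset.mul_sum, Finset.sum_range_succ']
    simp [Nat.factorial_succ, pow_succ]
    apply Finset.sum_congr rfl
    intro i _
    field_simp [Nat.factorial_succ]
  have hE : HasDerivAt (fun x : ℝ => Real.exp (-(3*x))) (Real.exp (-(3*x)) * (-3)) x := by
    have : HasDerivAt (fun x : ℝ => -(3*x)) (-3) x := by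
      simpa using ((hasDerivAt_id x).const_mul 3).fun_neg
    simpa using this.exp
  have := (hE.fun_mul hS).const_mul (-((n.factorial : ℝ)/3^(n+1)))
  refine this.congr_deriv (Eq.symm ?_)
  have hsplit : (∑ i ∈ range (n+1), (3*x)^i / (Nat.factorial i))
      = (∑ i ∈ range n, (3*x)^i / (Nat.factorial i)) + (3*x)^n / n.factorial :=
    Finset.sum_range_succ _ _
  rw [hsplit]
  have h3 : (3:ℝ)^(n+1) ≠ 0 := by positivity
  have hf : (n.factorial : ℝ) ≠ 0 := by exact_mod_cast n.factorial_ne_zero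
  field_simp
  ring_nf

lemma integral_pow_exp (n : ℕ) (t : ℝ) :
    (∫ s in (0:ℝ)..t, s ^ n * Real.exp (-(3*s))) =
      (n.factorial : ℝ)/3^(n+1) -
        Real.exp (-(3*t)) * ((n.factorial : ℝ)/3^(n+1) *
          ∑ i ∈ range (n+1), (3*t)^i / (Nat.factorial i)) := by
  rw [intervalIntegral.integral_eq_sub_of_hasDerivAt (fun s _ => deriv_aux n s)
    (by apply Continuous.intervalIntegrable; fun_prop)]
  simp [Finset.sum_range_succ']
  ring

lemma nat_id1 (h k : ℕ) (hk : k ≤ h) :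
    ((h+k).factorial : ℝ) =
      (h.choose k) * ((h+k).choose k) * (k.factorial)^2 * ((h-k).factorial) := by
  have h1 : h.choose k * k.factorial * (h-k).factorial = h.factorial :=
    Nat.choose_mul_factorial_mul_factorial hk
  have h2 : (h+k).choose k * k.factorial * (h+k-k).factorial = (h+k).factorial :=
    Nat.choose_mul_factorial_mul_factorial (Nat.le_add_left k h)
  rw [Nat.add_sub_cancel] at h2
  have : h.choose k * ((h+k).choose k) * (k.factorial)^2 * ((h-k).factorial)
      = (h+k).factorial := by
    rw [← h2, ← h1]; ring
  exact_mod_cast this.symm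

lemma nat_id2 (h k j : ℕ) (hk : k ≤ h) :
    ((h+j).factorial : ℝ) =
      (h.choose k) * ((h+j).choose j) * (k.factorial * ((h-k).factorial)) * j.factorial := by
  have h1 : h.choose k * k.factorial * (h-k).factorial = h.factorial :=
    Nat.choose_mul_factorial_mul_factorial hk
  have h2 : (h+j).choose j * j.factorial * (h+j-j).factorial = (h+j).factorial :=
    Nat.choose_mul_factorial_mul_factorial (Nat.le_add_left j h)
  rw [Nat.add_sub_cancel] at h2
  have : h.choose k * ((h+j).choose j) * (k.factorial * ((h-k).factorial)) * j.factorial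
      = (h+j).factorial := by
    rw [← h2, ← h1]; ring
  exact_mod_cast this.symm

lemma per_k (h k : ℕ) (t : ℝ) (hk : k ≤ h) :
    (∫ s in (0:ℝ)..t,
        (2/((k.factorial : ℝ)*((h-k).factorial)) *
            ∑ j ∈ range k, s^(h+j)*Real.exp (-(3*s))/(j.factorial : ℝ)
          + s^(h+k)*Real.exp (-(3*s))/((k.factorial : ℝ)^2*((h-k).factorial))))
    = ((h.choose k : ℝ) * ((h + k).choose k : ℝ) * (1 / 3 : ℝ) ^ (h + k + 1) +
            2 * (h.choose k : ℝ) *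
              ∑ j ∈ range k, ((h + j).choose j : ℝ) * (1 / 3 : ℝ) ^ (h + j + 1))
      - Real.exp (-(3*t)) *
          ((h.choose k : ℝ) * ((h + k).choose k : ℝ) * (1 / 3 : ℝ) ^ (h + k + 1) *
                ∑ i ∈ range (h + k + 1), (3 * t) ^ i / (Nat.factorial i) +
              2 * (h.choose k : ℝ) *
                ∑ j ∈ range k,
                  ((h + j).choose j : ℝ) * (1 / 3 : ℝ) ^ (h + j + 1) *
                    ∑ i ∈ range (h + j + 1), (3 * t) ^ i / (Nat.factorial i)) := by
  have hi1 : IntervalIntegrable (fun s : ℝ => 2/((k.factorial : ℝ)*((h-k).factorial)) *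
      ∑ j ∈ range k, s^(h+j)*Real.exp (-(3*s))/(j.factorial : ℝ)) MeasureTheory.volume 0 t :=
    Continuous.intervalIntegrable (by fun_prop) _ _
  have hi2 : IntervalIntegrable (fun s : ℝ =>
      s^(h+k)*Real.exp (-(3*s))/((k.factorial : ℝ)^2*((h-k).factorial))) MeasureTheory.volume 0 t :=
    Continuous.intervalIntegrable (by fun_prop) _ _
  rw [intervalIntegral.integral_add hi1 hi2, intervalIntegral.integral_const_mul,
    intervalIntegral.integral_finset_sum
      (fun j _ => Continuous.intervalIntegrable (by fun_prop) _ _)]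
  simp only [intervalIntegral.integral_div, integral_pow_exp]
  have hkf : ((k.factorial : ℝ)) ≠ 0 := by exact_mod_cast k.factorial_ne_zero
  have hhkf : (((h-k).factorial : ℝ)) ≠ 0 := by exact_mod_cast (h-k).factorial_ne_zero
  have key2 : ∀ j ∈ range k, 2/((k.factorial : ℝ)*((h-k).factorial)) *
      ((((h+j).factorial : ℝ)/3^(h+j+1) - Real.exp (-(3*t)) * (((h+j).factorial : ℝ)/3^(h+j+1) *
        ∑ i ∈ range (h+j+1), (3*t)^i / (Nat.factorial i)))/(j.factorial : ℝ))
    = 2 * (h.choose k : ℝ) * (((h + j).choose j : ℝ) * (1 / 3 : ℝ) ^ (h + j + 1))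
      - Real.exp (-(3*t)) * (2 * (h.choose k : ℝ) * (((h + j).choose j : ℝ) * (1 / 3 : ℝ) ^ (h + j + 1) *
          ∑ i ∈ range (h + j + 1), (3 * t) ^ i / (Nat.factorial i))) := by
    intro j _
    have hjf : ((j.factorial : ℝ)) ≠ 0 := by exact_mod_cast j.factorial_ne_zero
    rw [nat_id2 h k j hk]
    have h3 : (3:ℝ)^(h+j+1) ≠ 0 := by positivity
    simp only [one_div, inv_pow]
    field_simp
  rw [Finset.mul_sum, Finset.sum_congr rfl key2, Finset.sum_sub_distrib, ← Finset.mul_sum,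
    ← Finset.mul_sum, ← Finset.mul_sum, nat_id1 h k hk]
  have h3 : (3:ℝ)^(h+k+1) ≠ 0 := by positivity
  simp only [one_div, inv_pow]
  field_simp
  ring

theorem density_integral_eq (h : ℕ) (t : ℝ) (ht : 0 ≤ t) :
    (∫ s in (0 : ℝ)..t, s ^ h * exp (-(3 * s)) *
        (2 * ∑ k ∈ range (h + 1),
              (1 / ((Nat.factorial k) * (Nat.factorial (h - k)))) *
                ∑ j ∈ range k, s ^ j / (Nat.factorial j) +
          ∑ k ∈ range (h + 1),
            s ^ k / ((Nat.factorial k) ^ 2 * (Nat.factorial (h - k))))) =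
      (∑ k ∈ range (h + 1),
          ((h.choose k : ℝ) * ((h + k).choose k : ℝ) * (1 / 3 : ℝ) ^ (h + k + 1) +
            2 * (h.choose k : ℝ) *
              ∑ j ∈ range k, ((h + j).choose j : ℝ) * (1 / 3 : ℝ) ^ (h + j + 1))) -
        exp (-(3 * t)) *
          ∑ k ∈ range (h + 1),
            ((h.choose k : ℝ) * ((h + k).choose k : ℝ) * (1 / 3 : ℝ) ^ (h + k + 1) *
                ∑ i ∈ range (h + k + 1), (3 * t) ^ i / (Nat.factorial i) +
              2 * (h.choose k : ℝ) *
                ∑ j ∈ range k,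
                  ((h + j).choose j : ℝ) * (1 / 3 : ℝ) ^ (h + j + 1) *
                    ∑ i ∈ range (h + j + 1), (3 * t) ^ i / (Nat.factorial i)) := by
  have hpt : ∀ s : ℝ, s ^ h * exp (-(3 * s)) *
        (2 * ∑ k ∈ range (h + 1),
              (1 / ((Nat.factorial k) * (Nat.factorial (h - k)))) *
                ∑ j ∈ range k, s ^ j / (Nat.factorial j) +
          ∑ k ∈ range (h + 1),
            s ^ k / ((Nat.factorial k) ^ 2 * (Nat.factorial (h - k))))
      = ∑ k ∈ range (h+1),
          (2/((k.factorial : ℝ)*((h-k).factorial)) *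
              ∑ j ∈ range k, s^(h+j)*Real.exp (-(3*s))/(j.factorial : ℝ)
            + s^(h+k)*Real.exp (-(3*s))/((k.factorial : ℝ)^2*((h-k).factorial))) := by
    intro s
    simp only [Finset.mul_sum, mul_add, Finset.sum_add_distrib]
    congr 1
    · refine Finset.sum_congr rfl fun k _ => Finset.sum_congr rfl fun j _ => ?_
      rw [pow_add]; ring
    · refine Finset.sum_congr rfl fun k _ => ?_
      rw [pow_add]; ring
  rw [intervalIntegral.integral_congr (g := fun s => ∑ k ∈ range (h+1),
        (2/((k.factorial : ℝ)*((h-k).factorial)) *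
            ∑ j ∈ range k, s^(h+j)*Real.exp (-(3*s))/(j.factorial : ℝ)
          + s^(h+k)*Real.exp (-(3*s))/((k.factorial : ℝ)^2*((h-k).factorial))))
      (fun s _ => hpt s),
    intervalIntegral.integral_finset_sum
      (fun k _ => Continuous.intervalIntegrable (by fun_prop) _ _),
    Finset.sum_congr rfl (fun k hk => per_k h k t (Nat.lt_succ_iff.mp (Finset.mem_range.mp hk))),
    Finset.sum_sub_distrib, ← Finset.mul_sum]
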